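/- Let n be a nonnegative integer, let α > -1 and let k > 0 be real with (k+1)α > -1. Then the Krein-like moment of the Laguerre Rakhmanov density satisfies ∫₀^∞ x^{(k+1)α} e^{-(k+1)x} [L_n^{(α)}(x)]² dx = (k+1)^{-(k+1)α−1} Γ((k+1)α+1) C(n+α, n)² · F₂((k+1)α+1; −n, −n; α+1, α+1; 1/(k+1), 1/(k+1)). -/

import Mathlib

open MeasureTheory Finset Real

/-- Pochhammer symbol `(a)_k = a (a+1) ⋯ (a+k-1)`. -/
noncomputable def poch (a : ℝ) (k : ℕ) : ℝ := ∏ i ∈ Finset.range k, (a + i)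

/-- Generalized binomial coefficient `C(a, j) = (a-j+1)_j / j!`. -/
noncomputable def gbinom (a : ℝ) (j : ℕ) : ℝ := poch (a - j + 1) j / (j.factorial : ℝ)

/-- Generalized Laguerre polynomial `L_n^{(α)}`. -/
noncomputable def Lag (α : ℝ) (n : ℕ) (x : ℝ) : ℝ :=
  ∑ i ∈ Finset.range (n + 1),
    ((-1 : ℝ) ^ i / (i.factorial : ℝ)) * gbinom ((n : ℝ) + α) (n - i) * x ^ i

/-- Physicists' Hermite polynomial `H_n`. -/
noncomputable def Herm (n : ℕ) (x : ℝ) : ℝ :=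
  ∑ k ∈ Finset.range (n / 2 + 1),
    ((-1 : ℝ) ^ k * (n.factorial : ℝ) / ((k.factorial : ℝ) * ((n - 2 * k).factorial : ℝ))) *
      (2 * x) ^ (n - 2 * k)

/-- Jacobi polynomial `P_n^{(α,γ)}`. -/
noncomputable def Jac (α γ : ℝ) (n : ℕ) (x : ℝ) : ℝ :=
  ∑ k ∈ Finset.range (n + 1),
    gbinom ((n : ℝ) + α) (n - k) * gbinom ((n : ℝ) + γ) k *
      ((x - 1) / 2) ^ k * ((x + 1) / 2) ^ (n - k)

/-- Terminating Lauricella function of type A. -/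
noncomputable def lauricellaA {r : ℕ} (a : ℝ) (m : Fin r → ℕ) (c x : Fin r → ℝ) : ℝ :=
  ∑ j ∈ Fintype.piFinset (fun i => Finset.range (m i + 1)),
    poch a (∑ i, j i) *
      ∏ i, (poch (-(m i : ℝ)) (j i) / (poch (c i) (j i) * ((j i).factorial : ℝ)) * x i ^ (j i))

/-- Terminating Gauss hypergeometric sum `₂F₁(-k, b; c; x)`. -/
noncomputable def hyp2F1 (k : ℕ) (b c x : ℝ) : ℝ :=
  ∑ j ∈ Finset.range (k + 1),
    poch (-(k : ℝ)) j * poch b j / (poch c j * (j.factorial : ℝ)) * x ^ j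

/-- Terminating hypergeometric sum `₃F₂(-k, b₁, b₂; c₁, c₂; x)`. -/
noncomputable def hyp3F2 (k : ℕ) (b₁ b₂ c₁ c₂ x : ℝ) : ℝ :=
  ∑ j ∈ Finset.range (k + 1),
    poch (-(k : ℝ)) j * poch b₁ j * poch b₂ j /
      (poch c₁ j * poch c₂ j * (j.factorial : ℝ)) * x ^ j

/-- Gauss hypergeometric series `₂F₁(a, b; c; x)` (a terminating series when `a` or `b`
is a nonpositive integer). -/
noncomputable def hypSum (a b c x : ℝ) : ℝ :=
  ∑' j : ℕ, poch a j * poch b j / (poch c j * (j.factorial : ℝ)) * x ^ j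

/-- Terminating Appell function `F₂(a; -m₁, -m₂; c₁, c₂; x₁, x₂)`. -/
noncomputable def appellF2 (a : ℝ) (m₁ m₂ : ℕ) (c₁ c₂ x₁ x₂ : ℝ) : ℝ :=
  ∑ j₁ ∈ Finset.range (m₁ + 1), ∑ j₂ ∈ Finset.range (m₂ + 1),
    poch a (j₁ + j₂) * poch (-(m₁ : ℝ)) j₁ * poch (-(m₂ : ℝ)) j₂ /
      (poch c₁ j₁ * poch c₂ j₂ * (j₁.factorial : ℝ) * (j₂.factorial : ℝ)) * x₁ ^ j₁ * x₂ ^ j₂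

/-- `1/z!` with the convention that it vanishes for negative integers `z`. -/
noncomputable def invFacZ (z : ℤ) : ℝ := if 0 ≤ z then ((z.toNat.factorial : ℕ) : ℝ)⁻¹ else 0

/-- Pochhammer symbol extended to integer index via `(a)_k = Γ(a+k)/Γ(a)` for negative `k`. -/
noncomputable def pochZ (a : ℝ) (k : ℤ) : ℝ :=
  if 0 ≤ k then poch a k.toNat else Real.Gamma (a + (k : ℝ)) / Real.Gamma a

lemma poch_succ (a : ℝ) (m : ℕ) : poch a (m+1) = poch a m * (a + m) := Finset.prod_range_succ _ _

lemma poch_add (a : ℝ) (m l : ℕ) : poch a (m + l) = poch a m * poch (a + m) l := by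
  unfold poch
  rw [Finset.prod_range_add]
  congr 1
  exact Finset.prod_congr rfl fun i _ => by push_cast; ring

lemma poch_pos {b : ℝ} (hb : 0 < b) (m : ℕ) : 0 < poch b m := by
  unfold poch
  exact Finset.prod_pos fun i _ => by positivity

lemma Gamma_add_nat {b : ℝ} (hb : 0 < b) (m : ℕ) :
    Real.Gamma (b + m) = Real.Gamma b * poch b m := by
  induction m with
  | zero => simp [poch]
  | succ m ih =>
      have h1 : b + (m+1 : ℕ) = (b + m) + 1 := by push_cast; ring
      rw [h1, Real.Gamma_add_one (by positivity), ih, poch_succ]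
      ring

lemma poch_neg_nat (n i : ℕ) (h : i ≤ n) :
    poch (-(n:ℝ)) i = (-1)^i * (n.factorial : ℝ) / ((n-i).factorial : ℝ) := by
  induction i with
  | zero => simp [poch, Nat.factorial_ne_zero]
  | succ i ih =>
      have hi : i ≤ n := Nat.le_of_succ_le h
      have hcast : ((n - i : ℕ) : ℝ) = (n : ℝ) - i := by push_cast [Nat.cast_sub hi]; ring
      have hne : ((n:ℝ) - i) ≠ 0 := by
        rw [← hcast]
        exact_mod_cast Nat.sub_ne_zero_of_lt h
      have hnf : (n - i).factorial = (n - i) * (n - (i+1)).factorial := by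
        rw [show n - i = (n - (i+1)) + 1 by omega, Nat.factorial_succ]
      have hf1 : ((n - (i+1)).factorial : ℝ) ≠ 0 := Nat.cast_ne_zero.2 (Nat.factorial_ne_zero _)
      rw [poch_succ, ih hi, hnf]
      push_cast [hcast]
      field_simp
      ring

lemma key_coeff (α : ℝ) (hα : -1 < α) (n i : ℕ) (hi : i ≤ n) :
    (-1:ℝ)^i * gbinom ((n:ℝ) + α) (n - i) =
      gbinom ((n:ℝ) + α) n * poch (-(n:ℝ)) i / poch (α+1) i := by
  have hα1 : (0:ℝ) < α + 1 := by linarith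
  have hcast : ((n - i : ℕ) : ℝ) = (n : ℝ) - i := by push_cast [Nat.cast_sub hi]; ring
  unfold gbinom
  rw [hcast]
  rw [show (n:ℝ) + α - ((n:ℝ) - i) + 1 = (α + 1) + i by ring,
      show (n:ℝ) + α - (n:ℝ) + 1 = α + 1 by ring]
  have hsplit : poch (α+1) n = poch (α+1) i * poch ((α+1) + i) (n - i) := by
    rw [← poch_add]
    congr 1
    omega
  rw [hsplit, poch_neg_nat n i hi]
  have h1 : (0:ℝ) < poch (α+1) i := poch_pos hα1 i
  have hf1 : ((n - i).factorial : ℝ) ≠ 0 := Nat.cast_ne_zero.2 (Nat.factorial_ne_zero _)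
  have hf2 : ((n).factorial : ℝ) ≠ 0 := Nat.cast_ne_zero.2 (Nat.factorial_ne_zero _)
  field_simp

lemma int_basic {β s : ℝ} (hβ : -1 < β) (hs : 0 < s) (m : ℕ) :
    ∫ x in Set.Ioi (0:ℝ), x ^ β * Real.exp (-s*x) * x^m
      = (1/s) ^ (β + m + 1) * Real.Gamma (β + m + 1) := by
  have hm : (0:ℝ) ≤ (m:ℝ) := Nat.cast_nonneg m
  have ha : 0 < β + (m:ℝ) + 1 := by linarith
  rw [← integral_rpow_mul_exp_neg_mul_Ioi ha hs]
  refine setIntegral_congr_fun measurableSet_Ioi fun x hx => ?_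
  rw [show β + (m:ℝ) + 1 - 1 = β + m by ring]
  rw [mul_right_comm, ← Real.rpow_natCast x m, ← Real.rpow_add hx, neg_mul]

lemma int_integrable {β s : ℝ} (hβ : -1 < β) (hs : 0 < s) (m : ℕ) :
    IntegrableOn (fun x : ℝ => x ^ β * Real.exp (-s*x) * x^m) (Set.Ioi 0) := by
  have hm : (0:ℝ) ≤ (m:ℝ) := Nat.cast_nonneg m
  have h := integrableOn_rpow_mul_exp_neg_mul_rpow (s := β + m) (p := 1) (b := s)
    (by linarith) one_pos hs
  refine h.congr_fun (fun x hx => ?_) measurableSet_Ioi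
  rw [Set.mem_Ioi] at hx
  beta_reduce
  rw [Real.rpow_one, mul_right_comm, ← Real.rpow_natCast x m, ← Real.rpow_add hx]

noncomputable def cL (α : ℝ) (n i : ℕ) : ℝ :=
  ((-1:ℝ) ^ i / (i.factorial : ℝ)) * gbinom ((n : ℝ) + α) (n - i)

lemma cL_eq (α : ℝ) (hα : -1 < α) (n i : ℕ) (hi : i ≤ n) :
    cL α n i = gbinom ((n:ℝ)+α) n * poch (-(n:ℝ)) i / (poch (α+1) i * (i.factorial : ℝ)) := by
  unfold cL
  rw [div_mul_eq_mul_div, key_coeff α hα n i hi, div_div]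


/-- Krein-like moment of the Laguerre Rakhmanov density. -/
theorem laguerre_krein_moment (n : ℕ) (α k : ℝ) (hα : -1 < α) (hk : 0 < k)
    (hkα : -1 < (k + 1) * α) :
    ∫ x in Set.Ioi (0 : ℝ), x ^ ((k + 1) * α) * Real.exp (-(k + 1) * x) * (Lag α n x) ^ 2 =
      (k + 1) ^ (-(k + 1) * α - 1) * Real.Gamma ((k + 1) * α + 1) *
        gbinom ((n : ℝ) + α) n ^ 2 *
        appellF2 ((k + 1) * α + 1) n n (α + 1) (α + 1) (1 / (k + 1)) (1 / (k + 1)) := by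
  have hs : (0:ℝ) < k + 1 := by linarith
  have hβ : -1 < (k + 1) * α := hkα
  have hb : (0:ℝ) < (k + 1) * α + 1 := by linarith
  have hα1 : (0:ℝ) < α + 1 := by linarith
  -- Step 1: expand the square pointwise
  have hpt : Set.EqOn
      (fun x : ℝ => x ^ ((k + 1) * α) * Real.exp (-(k + 1) * x) * (Lag α n x) ^ 2)
      (fun x : ℝ => ∑ i₁ ∈ Finset.range (n+1), ∑ i₂ ∈ Finset.range (n+1),
        (cL α n i₁ * cL α n i₂) *
          (x ^ ((k + 1) * α) * Real.exp (-(k + 1) * x) * x ^ (i₁ + i₂))) (Set.Ioi 0) := by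
    intro x hx
    simp only [Lag, sq, Finset.sum_mul_sum, Finset.mul_sum, Finset.sum_mul, cL]
    refine Finset.sum_congr rfl fun i₁ _ => Finset.sum_congr rfl fun i₂ _ => ?_
    rw [pow_add]
    ring
  rw [setIntegral_congr_fun measurableSet_Ioi hpt]
  rw [MeasureTheory.integral_finset_sum _ (fun i₁ _ =>
    MeasureTheory.integrable_finset_sum _ (fun i₂ _ =>
      ((int_integrable hβ hs (i₁ + i₂)).const_mul _)))]
  have step2 : ∀ i₁ ∈ Finset.range (n+1),
      (∫ x in Set.Ioi (0:ℝ), ∑ i₂ ∈ Finset.range (n+1),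
        (cL α n i₁ * cL α n i₂) *
          (x ^ ((k + 1) * α) * Real.exp (-(k + 1) * x) * x ^ (i₁ + i₂)))
      = ∑ i₂ ∈ Finset.range (n+1), (cL α n i₁ * cL α n i₂) *
          ((1/(k+1)) ^ ((k + 1) * α + (i₁ + i₂ : ℕ) + 1) *
            Real.Gamma ((k + 1) * α + (i₁ + i₂ : ℕ) + 1)) := by
    intro i₁ _
    rw [MeasureTheory.integral_finset_sum _ (fun i₂ _ =>
      ((int_integrable hβ hs (i₁ + i₂)).const_mul _))]
    refine Finset.sum_congr rfl fun i₂ _ => ?_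
    rw [integral_const_mul, int_basic hβ hs (i₁ + i₂)]
  rw [Finset.sum_congr rfl step2]
  -- Step 3: match with the Appell sum termwise
  unfold appellF2
  rw [Finset.mul_sum]
  refine Finset.sum_congr rfl fun i₁ h₁ => ?_
  rw [Finset.mul_sum]
  refine Finset.sum_congr rfl fun i₂ h₂ => ?_
  have hi₁ : i₁ ≤ n := Nat.lt_succ_iff.mp (Finset.mem_range.mp h₁)
  have hi₂ : i₂ ≤ n := Nat.lt_succ_iff.mp (Finset.mem_range.mp h₂)
  rw [cL_eq α hα n i₁ hi₁, cL_eq α hα n i₂ hi₂]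
  -- Gamma expansion
  rw [show (k+1)*α + ((i₁+i₂ : ℕ):ℝ) + 1 = ((k+1)*α + 1) + ((i₁+i₂ : ℕ):ℝ) by ring,
      Gamma_add_nat hb (i₁ + i₂)]
  -- rpow expansion
  rw [Real.rpow_add (by positivity), Real.rpow_natCast, pow_add]
  rw [show (1/(k+1)) = (k+1)⁻¹ by rw [one_div]]
  rw [Real.inv_rpow hs.le, ← Real.rpow_neg hs.le]
  rw [show -((k+1)*α + 1) = -(k+1)*α - 1 by ring]
  have hQ₁ : poch (α+1) i₁ ≠ 0 := (poch_pos hα1 i₁).ne'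
  have hQ₂ : poch (α+1) i₂ ≠ 0 := (poch_pos hα1 i₂).ne'
  have hf₁ : ((i₁.factorial : ℕ) : ℝ) ≠ 0 := Nat.cast_ne_zero.2 (Nat.factorial_ne_zero _)
  have hf₂ : ((i₂.factorial : ℕ) : ℝ) ≠ 0 := Nat.cast_ne_zero.2 (Nat.factorial_ne_zero _)
  field_simp
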